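/- Let G be a profinite group, k a field, and H an open normal subgroup of G such that for every open normal subgroup K of G with K ≤ H, the characteristic of k does not divide the (finite) index [H : K] (i.e., the characteristic of k does not divide the supernatural order |H|). Let M be a k[G/H]-module, regarded as a discrete G-module over k via the projection G → G/H. Then M is a projective object of the category of discrete G-modules over k if and only if M is projective as a k[G/H]-module. -/

import Mathlib

open Function

/-- A module over the group algebra `k[G]` is a *discrete* `G`-module if every element is
fixed by some open normal subgroup of `G`. -/
def IsDiscreteGModK (G : Type) [Group G] [TopologicalSpace G] (k : Type) [Field k]
    (M : ModuleCat.{0} (MonoidAlgebra k G)) : Prop :=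
  ∀ x : M, ∃ H : Subgroup G, H.Normal ∧ IsOpen (H : Set G) ∧
    ∀ h ∈ H, (MonoidAlgebra.of k G h) • x = x

/-- `P` is a projective object of the category of discrete `G`-modules over `k`. -/
def IsProjectiveDiscreteGModK (G : Type) [Group G] [TopologicalSpace G] (k : Type) [Field k]
    (P : ModuleCat.{0} (MonoidAlgebra k G)) : Prop :=
  ∀ (M N : ModuleCat.{0} (MonoidAlgebra k G)),
    IsDiscreteGModK G k M → IsDiscreteGModK G k N →
    ∀ f : M →ₗ[MonoidAlgebra k G] N, Surjective f →
      ∀ g : P →ₗ[MonoidAlgebra k G] N,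
        ∃ h : P →ₗ[MonoidAlgebra k G] M, f.comp h = g


theorem aux_single_smul_congr {G : Type} [Group G] {k : Type} [Field k] {H : Subgroup G}
    {A : Type} [AddCommGroup A] [Module (MonoidAlgebra k G) A] {a : A}
    (ha : ∀ h ∈ H, MonoidAlgebra.of k G h • a = a) {g g' : G} (hgg' : g'⁻¹ * g ∈ H) (c : k) :
    (MonoidAlgebra.single g c : MonoidAlgebra k G) • a
      = (MonoidAlgebra.single g' c : MonoidAlgebra k G) • a := by
  have h1 : (MonoidAlgebra.single g' c : MonoidAlgebra k G) * MonoidAlgebra.of k G (g'⁻¹ * g)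
      = MonoidAlgebra.single g c := by
    rw [MonoidAlgebra.of_apply, MonoidAlgebra.single_mul_single, mul_one,
      mul_inv_cancel_left]
  calc (MonoidAlgebra.single g c : MonoidAlgebra k G) • a
      = (MonoidAlgebra.single g' c : MonoidAlgebra k G) •
          (MonoidAlgebra.of k G (g'⁻¹ * g) • a) := by rw [← mul_smul, h1]
    _ = _ := by rw [ha _ hgg']

theorem aux_mapDomain_comp {R M N O : Type} [Semiring R] (f : M → N) (g : N → O)
    (x : MonoidAlgebra R M) :
    MonoidAlgebra.mapDomain (g ∘ f) x = MonoidAlgebra.mapDomain g (MonoidAlgebra.mapDomain f x) := by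
  ext; simp [MonoidAlgebra.mapDomain, Finsupp.mapDomain_comp]

theorem aux_mapDomain_id {R M : Type} [Semiring R] (x : MonoidAlgebra R M) :
    MonoidAlgebra.mapDomain id x = x := by
  ext; simp [MonoidAlgebra.mapDomain, Finsupp.mapDomain_id]

theorem aux_smul_eq_mapDomain {G : Type} [Group G] {k : Type} [Field k] {H : Subgroup G}
    [H.Normal]
    {A : Type} [AddCommGroup A] [Module (MonoidAlgebra k G) A] {a : A}
    (ha : ∀ h ∈ H, MonoidAlgebra.of k G h • a = a) (r : MonoidAlgebra k G) :
    r • a = (show MonoidAlgebra k G from MonoidAlgebra.mapDomain (fun g : G => ((QuotientGroup.mk g : G ⧸ H)).out) r) • a := by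
  induction r using MonoidAlgebra.induction with
  | zero => simp
  | single_add g c f hg hc ih =>
    rw [MonoidAlgebra.mapDomain_add, MonoidAlgebra.mapDomain_single, add_smul, add_smul, ih]
    congr 1
    refine aux_single_smul_congr ha ?_ c
    exact (QuotientGroup.eq).mp (QuotientGroup.out_eq' (QuotientGroup.mk g))

theorem aux_smul_congr {G : Type} [Group G] {k : Type} [Field k] {H : Subgroup G} [H.Normal]
    {A : Type} [AddCommGroup A] [Module (MonoidAlgebra k G) A] {a : A}
    (ha : ∀ h ∈ H, MonoidAlgebra.of k G h • a = a) {r₁ r₂ : MonoidAlgebra k G}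
    (h : MonoidAlgebra.mapDomainRingHom k (QuotientGroup.mk' H) r₁
       = MonoidAlgebra.mapDomainRingHom k (QuotientGroup.mk' H) r₂) :
    r₁ • a = r₂ • a := by
  rw [aux_smul_eq_mapDomain ha r₁, aux_smul_eq_mapDomain ha r₂]
  have e1 : (fun g : G => ((QuotientGroup.mk g : G ⧸ H)).out)
      = (Quotient.out : G ⧸ H → G) ∘ (QuotientGroup.mk' H) := rfl
  rw [e1, aux_mapDomain_comp, aux_mapDomain_comp]
  rw [MonoidAlgebra.mapDomainRingHom_apply] at h
  rw [show (MonoidAlgebra.mapDomain (⇑(QuotientGroup.mk' H)) r₁ : MonoidAlgebra k (G ⧸ H))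
      = MonoidAlgebra.mapDomain (⇑(QuotientGroup.mk' H)) r₂ from h]

theorem aux_exists_inv_lift {G : Type} [Group G] [TopologicalSpace G] [IsTopologicalGroup G]
    [CompactSpace G] {k : Type} [Field k]
    (H : Subgroup G) [H.Normal] (hHopen : IsOpen (H : Set G))
    (hchar : ∀ K : Subgroup G, K.Normal → IsOpen (K : Set G) → K ≤ H →
      ¬ (ringChar k : ℕ) ∣ K.relIndex H)
    {A B : Type} [AddCommGroup A] [Module (MonoidAlgebra k G) A]
    [AddCommGroup B] [Module (MonoidAlgebra k G) B]
    (hdA : ∀ x : A, ∃ K : Subgroup G, K.Normal ∧ IsOpen (K : Set G) ∧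
      ∀ h ∈ K, MonoidAlgebra.of k G h • x = x)
    (f : A →ₗ[MonoidAlgebra k G] B) (hf : Surjective f)
    (b : B) (hb : ∀ h ∈ H, MonoidAlgebra.of k G h • b = b) :
    ∃ a : A, (∀ h ∈ H, MonoidAlgebra.of k G h • a = a) ∧ f a = b := by
  obtain ⟨a₀, ha₀⟩ := hf b
  obtain ⟨K, hKn, hKo, hKfix⟩ := hdA a₀
  set K' := K ⊓ H with hK'
  have hK'n : K'.Normal := Subgroup.normal_inf_normal K H
  have hK'o : IsOpen (K' : Set G) := by
    have : (K' : Set G) = (K : Set G) ∩ (H : Set G) := rfl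
    rw [this]; exact hKo.inter hHopen
  have hK'le : K' ≤ H := inf_le_right
  set n := K'.relIndex H with hn
  have hfin : Finite (G ⧸ K') := Subgroup.quotient_finite_of_isOpen K' hK'o
  have hidx : K'.index ≠ 0 := Subgroup.index_ne_zero_of_finite
  have hn0 : n ≠ 0 := by
    intro h0
    exact hidx (by rw [← Subgroup.relIndex_mul_index hK'le, ← hn, h0, zero_mul])
  have hnk : (n : k) ≠ 0 := fun h => hchar K' hK'n hK'o hK'le ((ringChar.spec k n).mp h)
  have hfinQ : Finite (H ⧸ K'.subgroupOf H) := by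
    refine Nat.finite_of_card_ne_zero ?_
    rw [← Subgroup.index_eq_card]
    exact hn0
  letI : Fintype (H ⧸ K'.subgroupOf H) := Fintype.ofFinite _
  have hcard : Fintype.card (H ⧸ K'.subgroupOf H) = n := by
    rw [hn, Subgroup.relIndex, Subgroup.index_eq_card, Nat.card_eq_fintype_card]
  set T : A := ∑ q : H ⧸ K'.subgroupOf H, MonoidAlgebra.of k G ((q.out : H) : G) • a₀ with hT
  -- invariance of T
  have hTinv : ∀ h ∈ H, MonoidAlgebra.of k G h • T = T := by
    intro h hh
    rw [hT, Finset.smul_sum]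
    have key : ∀ q : H ⧸ K'.subgroupOf H,
        MonoidAlgebra.of k G h • MonoidAlgebra.of k G ((q.out : H) : G) • a₀
          = MonoidAlgebra.of k G ((((⟨h, hh⟩ : H) • q).out : H) : G) • a₀ := by
      intro q
      rw [← mul_smul, ← map_mul]
      have hmk : (QuotientGroup.mk (((⟨h, hh⟩ : H) • q).out) : H ⧸ K'.subgroupOf H)
          = (QuotientGroup.mk ((⟨h, hh⟩ : H) * q.out) : H ⧸ K'.subgroupOf H) := by
        rw [QuotientGroup.out_eq']
        exact (MulAction.Quotient.mk_smul_out (K'.subgroupOf H) (⟨h, hh⟩ : H) q).symm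
      have hd : (((⟨h, hh⟩ : H) • q).out)⁻¹ * ((⟨h, hh⟩ : H) * q.out) ∈ K'.subgroupOf H :=
        QuotientGroup.eq.mp hmk
      have hdK : ((((⟨h, hh⟩ : H) • q).out)⁻¹ * ((⟨h, hh⟩ : H) * q.out) : H).val ∈ K :=
        inf_le_left (α := Subgroup G) hd
      rw [MonoidAlgebra.of_apply, MonoidAlgebra.of_apply]
      refine aux_single_smul_congr (H := K) hKfix ?_ 1
      have : ((((⟨h, hh⟩ : H) • q).out : H) : G)⁻¹ * (h * ((q.out : H) : G))
          = ((((⟨h, hh⟩ : H) • q).out)⁻¹ * ((⟨h, hh⟩ : H) * q.out) : H).val := by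
        push_cast
        rfl
      rw [this]
      exact hdK
    calc ∑ q : H ⧸ K'.subgroupOf H,
        MonoidAlgebra.of k G h • MonoidAlgebra.of k G ((q.out : H) : G) • a₀
        = ∑ q : H ⧸ K'.subgroupOf H,
            MonoidAlgebra.of k G ((((⟨h, hh⟩ : H) • q).out : H) : G) • a₀ := by
          exact Finset.sum_congr rfl fun q _ => key q
      _ = T := by
          rw [hT]
          exact Fintype.sum_bijective (fun q => (⟨h, hh⟩ : H) • q)
            (MulAction.bijective _) _ _ (fun q => rfl)
  -- image of T
  have hfT : f T = (n : ℕ) • b := by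
    rw [hT, map_sum]
    have : ∀ q : H ⧸ K'.subgroupOf H,
        f (MonoidAlgebra.of k G ((q.out : H) : G) • a₀) = b := by
      intro q
      rw [map_smul, ha₀]
      exact hb _ (q.out : H).2
    rw [Finset.sum_congr rfl fun q _ => this q, Finset.sum_const, Finset.card_univ, hcard]
  refine ⟨(algebraMap k (MonoidAlgebra k G) ((n : k)⁻¹)) • T, ?_, ?_⟩
  · intro h hh
    rw [smul_smul, ← Algebra.commutes, ← smul_smul, hTinv h hh]
  · rw [map_smul, hfT]
    have h1 : ((n : ℕ) • b : B) = (algebraMap k (MonoidAlgebra k G) (n : k)) • b := by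
      rw [map_natCast (algebraMap k (MonoidAlgebra k G)) n, Nat.cast_smul_eq_nsmul]
    rw [h1, smul_smul, ← map_mul, inv_mul_cancel₀ hnk, map_one, one_smul]


/-- The canonical `k`-linear section of `k[G] → k[G/H]` given by coset representatives. -/
noncomputable def auxTau {G : Type} [Group G] {k : Type} [Field k] (H : Subgroup G) [H.Normal]
    (c : MonoidAlgebra k (G ⧸ H)) : MonoidAlgebra k G :=
  MonoidAlgebra.mapDomain Quotient.out c

theorem aux_pi_tau {G : Type} [Group G] {k : Type} [Field k] (H : Subgroup G) [H.Normal]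
    (c : MonoidAlgebra k (G ⧸ H)) :
    (MonoidAlgebra.mapDomainRingHom k (QuotientGroup.mk' H)) (auxTau H c) = c := by
  rw [MonoidAlgebra.mapDomainRingHom_apply]
  show MonoidAlgebra.mapDomain (⇑(QuotientGroup.mk' H)) (MonoidAlgebra.mapDomain Quotient.out c) = c
  rw [← aux_mapDomain_comp]
  have h2 : (⇑(QuotientGroup.mk' H) ∘ (Quotient.out : G ⧸ H → G)) = id := by
    funext q; exact QuotientGroup.out_eq' q
  rw [h2, aux_mapDomain_id]

theorem auxTau_zero {G : Type} [Group G] {k : Type} [Field k] (H : Subgroup G) [H.Normal] :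
    auxTau (k := k) H 0 = 0 := MonoidAlgebra.mapDomain_zero _

theorem auxTau_add {G : Type} [Group G] {k : Type} [Field k] (H : Subgroup G) [H.Normal]
    (c d : MonoidAlgebra k (G ⧸ H)) : auxTau H (c + d) = auxTau H c + auxTau H d :=
  MonoidAlgebra.mapDomain_add _ _ _

theorem aux_pi_of {G : Type} [Group G] {k : Type} [Field k] (H : Subgroup G) [H.Normal]
    (h : G) :
    (MonoidAlgebra.mapDomainRingHom k (QuotientGroup.mk' H)) (MonoidAlgebra.of k G h)
      = MonoidAlgebra.of k (G ⧸ H) (QuotientGroup.mk h) := by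
  simp [MonoidAlgebra.mapDomainRingHom_apply, MonoidAlgebra.of_apply, Finsupp.mapDomain_single]

section PlainCompHom

variable {G : Type} [Group G] {k : Type} [Field k] (H : Subgroup G) [H.Normal]
variable {A : Type} [AddCommGroup A] [Module (MonoidAlgebra k (G ⧸ H)) A]

theorem aux_fix {h : G} (hh : h ∈ H) (x : A) :
    (MonoidAlgebra.mapDomainRingHom k (QuotientGroup.mk' H))
      (MonoidAlgebra.of k G h) • x = x := by
  rw [aux_pi_of, show (QuotientGroup.mk h : G ⧸ H) = 1 from (QuotientGroup.eq_one_iff h).mpr hh,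
    map_one, one_smul]

theorem aux_tau_smul (c : MonoidAlgebra k (G ⧸ H)) (x : A) :
    (MonoidAlgebra.mapDomainRingHom k (QuotientGroup.mk' H)) (auxTau H c) • x = c • x := by
  rw [aux_pi_tau]

/-- A `k[G]`-linear map between modules pulled back along `k[G] → k[G/H]` is
`k[G/H]`-linear. -/
theorem aux_upgrade {B : Type} [AddCommGroup B] [Module (MonoidAlgebra k (G ⧸ H)) B] :
    letI : Module (MonoidAlgebra k G) A :=
      Module.compHom A (MonoidAlgebra.mapDomainRingHom k (QuotientGroup.mk' H))
    letI : Module (MonoidAlgebra k G) B :=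
      Module.compHom B (MonoidAlgebra.mapDomainRingHom k (QuotientGroup.mk' H))
    ∀ (F : A →ₗ[MonoidAlgebra k G] B) (c : MonoidAlgebra k (G ⧸ H)) (x : A),
      F (c • x) = c • F x := by
  intro F c x
  letI : Module (MonoidAlgebra k G) A :=
    Module.compHom A (MonoidAlgebra.mapDomainRingHom k (QuotientGroup.mk' H))
  letI : Module (MonoidAlgebra k G) B :=
    Module.compHom B (MonoidAlgebra.mapDomainRingHom k (QuotientGroup.mk' H))
  have e0 : auxTau H c • x = c • x := aux_tau_smul H c x
  have e2 : auxTau H c • F x = c • F x := aux_tau_smul H c (F x)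
  rw [← e0, ← e2]
  exact F.map_smul _ x

end PlainCompHom

/-- **(Chirvasitu–Kanda, Corollary 3.4(a).)** Let `G` be a profinite group, `k` a field and
`H` an open normal subgroup of `G` such that `char k` divides no index `[H : K]` for open
normal `K ≤ H` of `G`. A `k[G/H]`-module `M`, regarded as a discrete `G`-module via the
projection `G → G/H`, is a projective object of the category of discrete `G`-modules over `k`
if and only if it is projective as a `k[G/H]`-module. -/
theorem stmt_3 (G : Type) [Group G] [TopologicalSpace G] [IsTopologicalGroup G]
    [CompactSpace G] [T2Space G] [TotallyDisconnectedSpace G] (k : Type) [Field k]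
    (H : Subgroup G) [H.Normal] (hHopen : IsOpen (H : Set G))
    (hchar : ∀ K : Subgroup G, K.Normal → IsOpen (K : Set G) → K ≤ H →
      ¬ (ringChar k : ℕ) ∣ K.relIndex H)
    (M : Type) [AddCommGroup M] [Module (MonoidAlgebra k (G ⧸ H)) M] :
    letI : Module (MonoidAlgebra k G) M :=
      Module.compHom M (MonoidAlgebra.mapDomainRingHom k (QuotientGroup.mk' H))
    (IsProjectiveDiscreteGModK G k (ModuleCat.of (MonoidAlgebra k G) M) ↔
      Module.Projective (MonoidAlgebra k (G ⧸ H)) M) := by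
  letI instRM : Module (MonoidAlgebra k G) M :=
    Module.compHom M (MonoidAlgebra.mapDomainRingHom k (QuotientGroup.mk' H))
  show IsProjectiveDiscreteGModK G k (ModuleCat.of (MonoidAlgebra k G) M) ↔
      Module.Projective (MonoidAlgebra k (G ⧸ H)) M
  constructor
  · -- projective in discrete G-mod → projective over k[G/H]
    intro hp
    rw [Module.projective_def']
    letI instRF : Module (MonoidAlgebra k G) (M →₀ MonoidAlgebra k (G ⧸ H)) :=
      Module.compHom _ (MonoidAlgebra.mapDomainRingHom k (QuotientGroup.mk' H))
    have hdF : IsDiscreteGModK G k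
        (ModuleCat.of (MonoidAlgebra k G) (M →₀ MonoidAlgebra k (G ⧸ H))) := fun x =>
      ⟨H, ‹H.Normal›, hHopen, fun h hh =>
        aux_fix (k := k) (A := M →₀ MonoidAlgebra k (G ⧸ H)) H hh x⟩
    have hdM : IsDiscreteGModK G k (ModuleCat.of (MonoidAlgebra k G) M) := fun x =>
      ⟨H, ‹H.Normal›, hHopen, fun h hh => aux_fix (k := k) (A := M) H hh x⟩
    have hεsurj : Surjective
        (Finsupp.linearCombination (MonoidAlgebra k (G ⧸ H)) (id : M → M)) :=
      Finsupp.linearCombination_id_surjective _ _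
    let ε' : (M →₀ MonoidAlgebra k (G ⧸ H)) →ₗ[MonoidAlgebra k G] M :=
      { toFun := Finsupp.linearCombination (MonoidAlgebra k (G ⧸ H)) (id : M → M)
        map_add' := (Finsupp.linearCombination (MonoidAlgebra k (G ⧸ H)) (id : M → M)).map_add
        map_smul' := fun r x =>
          (Finsupp.linearCombination (MonoidAlgebra k (G ⧸ H)) (id : M → M)).map_smul
            ((MonoidAlgebra.mapDomainRingHom k (QuotientGroup.mk' H)) r) x }
    obtain ⟨hlin, hcomp⟩ := hp (ModuleCat.of (MonoidAlgebra k G) (M →₀ MonoidAlgebra k (G ⧸ H)))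
      (ModuleCat.of (MonoidAlgebra k G) M) hdF hdM ε' hεsurj LinearMap.id
    refine ⟨{ toFun := fun x => hlin x
              map_add' := hlin.map_add
              map_smul' := fun c x =>
                aux_upgrade (A := M) (B := M →₀ MonoidAlgebra k (G ⧸ H)) H hlin c x }, ?_⟩
    exact LinearMap.ext fun m => LinearMap.congr_fun hcomp m
  · -- projective over k[G/H] → projective in discrete G-mod
    intro hM
    intro A B hdA hdB f hf g
    obtain ⟨s, hs⟩ := Module.projective_def.mp hM
    have hbinv : ∀ m : M, ∀ h ∈ H, MonoidAlgebra.of k G h • (g m) = g m := by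
      intro m h hh
      have hm : MonoidAlgebra.of k G h • m = m := aux_fix (k := k) (A := M) H hh m
      calc MonoidAlgebra.of k G h • g m
          = g (MonoidAlgebra.of k G h • m) := (g.map_smul _ m).symm
        _ = g m := by rw [hm]
    have hex : ∀ m : M, ∃ a : A, (∀ h ∈ H, MonoidAlgebra.of k G h • a = a) ∧ f a = g m :=
      fun m => aux_exists_inv_lift H hHopen hchar hdA f hf (g m) (hbinv m)
    choose a hainv hfa using hex
    have hsmulτ : ∀ (r : MonoidAlgebra k G) (c : MonoidAlgebra k (G ⧸ H)) (m : M),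
        auxTau H ((MonoidAlgebra.mapDomainRingHom k (QuotientGroup.mk' H)) r * c) • a m
          = r • (auxTau H c • a m) := by
      intro r c m
      rw [← mul_smul]
      refine aux_smul_congr (hainv m) ?_
      rw [aux_pi_tau, map_mul, aux_pi_tau]
    have hmap : ∃ h : M →ₗ[MonoidAlgebra k G] A, ∀ x : M, f (h x) = g x := by
      refine ⟨{ toFun := fun x => (s x).sum fun m c => auxTau H c • a m
                map_add' := fun x y => ?_
                map_smul' := fun r x => ?_ }, fun x => ?_⟩
      · show ((s (x + y)).sum fun m c => auxTau H c • a m)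
          = ((s x).sum fun m c => auxTau H c • a m)
            + ((s y).sum fun m c => auxTau H c • a m)
        rw [map_add]
        exact Finsupp.sum_add_index' (fun m => by rw [auxTau_zero, zero_smul])
          (fun m c d => by rw [auxTau_add, add_smul])
      · show ((s (r • x)).sum fun m c => auxTau H c • a m)
          = r • (s x).sum fun m c => auxTau H c • a m
        have e0 : r • x = (MonoidAlgebra.mapDomainRingHom k (QuotientGroup.mk' H)) r • x := rfl
        rw [e0, map_smul, Finsupp.sum_smul_index' (fun m => by rw [auxTau_zero, zero_smul]),
          Finsupp.smul_sum]
        refine Finsupp.sum_congr fun m _ => ?_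
        rw [smul_eq_mul]
        exact hsmulτ r _ m
      · show f ((s x).sum fun m c => auxTau H c • a m) = g x
        have e1 : ∀ (m : M) (c : MonoidAlgebra k (G ⧸ H)),
            f (auxTau H c • a m) = g (c • m) := by
          intro m c
          have e2 : auxTau H c • m = c • m := aux_tau_smul H c m
          rw [map_smul, hfa m, ← g.map_smul, e2]
        calc f ((s x).sum fun m c => auxTau H c • a m)
            = (s x).sum fun m c => f (auxTau H c • a m) := map_finsuppSum f _ _
          _ = (s x).sum fun m c => g (c • m) := Finsupp.sum_congr fun m _ => e1 m _
          _ = g ((s x).sum fun m c => c • m) := (map_finsuppSum g _ _).symm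
          _ = g x := by
              have e3 : ((s x).sum fun m c => c • m) = x := by
                have e4 := hs x
                rwa [Finsupp.linearCombination_apply] at e4
              rw [e3]
    obtain ⟨h, hc⟩ := hmap
    exact ⟨h, LinearMap.ext fun x => hc x⟩
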